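/- For the purely quadratic utility function U_2(X_S) = (1/2)(X_S - X_D)ᵀ H (X_S - X_D), where H is a symmetric matrix and X_S = Σ_{j∈S} X_j with X_D = Σ_{j∈D} X_j, the Shapley value of player j equals -(1/2) X_Dᵀ H X_j. -/

import Mathlib

open Finset Matrix

lemma card_filter_mem_powersetCard {α : Type*} [DecidableEq α] (A : Finset α) (i : α)
    (hi : i ∈ A) (r : ℕ) :
    ((A.powersetCard (r+1)).filter (fun S => i ∈ S)).card = (A.card - 1).choose r := by
  rw [← Finset.card_erase_of_mem hi, ← Finset.card_powersetCard r (A.erase i)]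
  apply Finset.card_bij (fun S _ => S.erase i)
  · intro S hS
    simp only [Finset.mem_filter, Finset.mem_powersetCard] at hS
    obtain ⟨⟨hsub, hcard⟩, hmem⟩ := hS
    simp only [Finset.mem_powersetCard]
    constructor
    · exact Finset.erase_subset_erase i hsub
    · rw [Finset.card_erase_of_mem hmem, hcard]; omega
  · intro S hS T hT h
    simp only [Finset.mem_filter] at hS hT
    rw [← Finset.insert_erase hS.2, ← Finset.insert_erase hT.2, h]
  · intro T hT
    simp only [Finset.mem_powersetCard] at hT
    have hiT : i ∉ T := fun h => (Finset.notMem_erase i A) (hT.1 h)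
    refine ⟨insert i T, ?_, ?_⟩
    · simp only [Finset.mem_filter, Finset.mem_powersetCard]
      refine ⟨⟨?_, ?_⟩, Finset.mem_insert_self i T⟩
      · exact Finset.insert_subset hi (hT.1.trans (Finset.erase_subset i A))
      · rw [Finset.card_insert_of_notMem hiT, hT.2]
    · rw [Finset.erase_insert hiT]

lemma sum_powersetCard_sum {α : Type*} [DecidableEq α] (A : Finset α) (r : ℕ) (g : α → ℝ) :
    ∑ S ∈ A.powersetCard (r+1), ∑ i ∈ S, g i
      = ((A.card - 1).choose r : ℝ) * ∑ i ∈ A, g i := by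
  have h1 : ∀ S ∈ A.powersetCard (r+1), ∑ i ∈ S, g i
      = ∑ i ∈ A, if i ∈ S then g i else 0 := by
    intro S hS
    rw [Finset.sum_ite_mem, Finset.inter_eq_right.2 (Finset.mem_powersetCard.1 hS).1]
  rw [Finset.sum_congr rfl h1, Finset.sum_comm, Finset.mul_sum]
  refine Finset.sum_congr rfl fun i hi => ?_
  rw [Finset.sum_ite, Finset.sum_const, Finset.sum_const_zero, add_zero,
    card_filter_mem_powersetCard A i hi r, nsmul_eq_mul]

lemma dot_symm {m : ℕ} (H : Matrix (Fin m) (Fin m) ℝ) (hH : H.IsSymm) (u v : Fin m → ℝ) :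
    u ⬝ᵥ H.mulVec v = v ⬝ᵥ H.mulVec u := by
  rw [Matrix.dotProduct_mulVec, ← Matrix.mulVec_transpose, hH.eq, dotProduct_comm]

lemma quad_marginal {m : ℕ} (H : Matrix (Fin m) (Fin m) ℝ) (hH : H.IsSymm)
    (a T x : Fin m → ℝ) :
    (1/2) * ((a + x - T) ⬝ᵥ H.mulVec (a + x - T)) - (1/2) * ((x - T) ⬝ᵥ H.mulVec (x - T))
      = (1/2) * (a ⬝ᵥ H.mulVec a) + a ⬝ᵥ H.mulVec x - a ⬝ᵥ H.mulVec T := by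
  have hxa := dot_symm H hH x a
  have hTa := dot_symm H hH T a
  simp only [Matrix.mulVec_add, Matrix.mulVec_sub, sub_dotProduct,
    add_dotProduct, dotProduct_add, dotProduct_sub] at *
  linarith

lemma dot_mulVec_sum {m : ℕ} (H : Matrix (Fin m) (Fin m) ℝ) (u : Fin m → ℝ)
    {ι : Type*} (S : Finset ι) (X : ι → Fin m → ℝ) :
    u ⬝ᵥ H.mulVec (∑ i ∈ S, X i) = ∑ i ∈ S, u ⬝ᵥ H.mulVec (X i) := by
  classical
  induction S using Finset.induction with
  | empty => simp
  | insert _ _ h ih =>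
    rw [Finset.sum_insert h, Finset.sum_insert h, Matrix.mulVec_add,
      dotProduct_add, ih]

lemma gauss_sum_icc (d : ℕ) :
    ∑ k ∈ Finset.Icc 1 d, (((k - 1 : ℕ) : ℝ)) = (d : ℝ) * ((d - 1 : ℕ) : ℝ) / 2 := by
  induction d with
  | zero => simp
  | succ n ih =>
    rw [Finset.sum_Icc_succ_top (by omega), ih]
    rcases Nat.eq_zero_or_pos n with h | h
    · subst h; norm_num
    · have h1 : ((n - 1 : ℕ) : ℝ) = (n : ℝ) - 1 := by
        rw [Nat.cast_sub h]; norm_num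
      have h2 : ((n + 1 - 1 : ℕ) : ℝ) = (n : ℝ) := by norm_num
      rw [h1, h2]
      push_cast
      ring

theorem shapley_quadratic_utility (d m : ℕ) (hd : 0 < d)
    (X : Fin d → Fin m → ℝ) (H : Matrix (Fin m) (Fin m) ℝ) (hH : H.IsSymm)
    (U : (Fin m → ℝ) → ℝ)
    (hU : ∀ x, U x = (1 / 2) * ((x - ∑ i, X i) ⬝ᵥ H.mulVec (x - ∑ i, X i)))
    (j : Fin d) :
    (1 / (d : ℝ)) * ∑ k ∈ Finset.Icc 1 d,
        (((d - 1).choose (k - 1) : ℝ))⁻¹ *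
          ∑ S ∈ (Finset.univ.erase j).powersetCard (k - 1),
            (U (∑ i ∈ insert j S, X i) - U (∑ i ∈ S, X i))
      = -(1 / 2) * ((∑ i, X i) ⬝ᵥ H.mulVec (X j)) := by
  classical
  set A : Finset (Fin d) := Finset.univ.erase j with hA
  have hAcard : A.card = d - 1 := by
    rw [hA, Finset.card_erase_of_mem (Finset.mem_univ j), Finset.card_univ, Fintype.card_fin]
  set T : Fin m → ℝ := ∑ i, X i with hTdef
  set q : ℝ := X j ⬝ᵥ H.mulVec (X j) with hq
  set t : ℝ := X j ⬝ᵥ H.mulVec T with ht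
  set g : Fin d → ℝ := fun i => X j ⬝ᵥ H.mulVec (X i) with hg
  set s : ℝ := ∑ i ∈ A, g i with hs
  set c : ℝ := (1/2) * q - t with hc
  have hst : s = t - q := by
    rw [hs, hA, Finset.sum_erase_eq_sub (Finset.mem_univ j)]
    congr 1
    rw [ht, hTdef, dot_mulVec_sum]
  -- marginal contribution
  have hmarg : ∀ k, ∀ S ∈ A.powersetCard (k-1),
      U (∑ i ∈ insert j S, X i) - U (∑ i ∈ S, X i) = c + ∑ i ∈ S, g i := by
    intro k S hS
    have hjS : j ∉ S := fun h =>
      Finset.notMem_erase j Finset.univ ((Finset.mem_powersetCard.1 hS).1 h)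
    rw [Finset.sum_insert hjS, hU, hU, quad_marginal H hH, dot_mulVec_sum, hc]
    ring
  -- value of each term in the k-sum
  have hterm : ∀ k ∈ Finset.Icc 1 d,
      (((d - 1).choose (k - 1) : ℝ))⁻¹ *
        ∑ S ∈ A.powersetCard (k - 1), (U (∑ i ∈ insert j S, X i) - U (∑ i ∈ S, X i))
      = c + (((k - 1 : ℕ) : ℝ) / ((d - 1 : ℕ) : ℝ)) * s := by
    intro k hk
    obtain ⟨hk1, hkd⟩ := Finset.mem_Icc.1 hk
    have hCpos : 0 < ((d - 1).choose (k - 1) : ℝ) := by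
      exact_mod_cast Nat.choose_pos (by omega)
    rw [Finset.sum_congr rfl (hmarg k), Finset.sum_add_distrib, Finset.sum_const,
      Finset.card_powersetCard, hAcard, nsmul_eq_mul]
    rcases Nat.lt_or_ge k 2 with h2 | h2
    · have hk1' : k = 1 := by omega
      subst hk1'
      simp only [Nat.sub_self, Finset.powersetCard_zero, Finset.sum_singleton,
        Finset.sum_empty, Nat.cast_zero, zero_div, zero_mul, add_zero]
      rw [inv_mul_cancel_left₀ hCpos.ne']
    · have hkk : k - 1 = (k - 2) + 1 := by omega
      rw [hkk, sum_powersetCard_sum A (k-2) g, hAcard, ← hs]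
      have hdd : d - 1 - 1 = d - 2 := by omega
      rw [hdd]
      have hd2 : 2 ≤ d := le_trans h2 hkd
      have hid : ((d - 1 : ℕ) : ℝ) * ((d-2).choose (k-2) : ℝ)
          = ((d - 1).choose (k - 1) : ℝ) * ((k - 1 : ℕ) : ℝ) := by
        have := Nat.add_one_mul_choose_eq (d-2) (k-2)
        have e1 : d - 2 + 1 = d - 1 := by omega
        have e2 : k - 2 + 1 = k - 1 := by omega
        rw [e1, e2] at this
        exact_mod_cast this
      have hD : ((d - 1 : ℕ) : ℝ) ≠ 0 := by
        have : 0 < d - 1 := by omega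
        positivity
      rw [← hkk]
      have hBeq : ((d-2).choose (k-2) : ℝ) * s
          = ((d - 1).choose (k - 1) : ℝ) * (((k - 1 : ℕ) : ℝ) / ((d - 1 : ℕ) : ℝ) * s) := by
        rw [eq_comm, mul_comm, mul_assoc, div_mul_eq_mul_div, div_eq_iff hD, mul_comm]
        linear_combination (-s) * hid
      rw [mul_add, inv_mul_cancel_left₀ hCpos.ne', hBeq, inv_mul_cancel_left₀ hCpos.ne']
  rw [Finset.sum_congr rfl hterm, Finset.sum_add_distrib, Finset.sum_const,
    Nat.card_Icc, Nat.add_sub_cancel, ← Finset.sum_mul, ← Finset.sum_div, gauss_sum_icc,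
    nsmul_eq_mul]
  have hgoal : -(1 / 2) * (T ⬝ᵥ H.mulVec (X j)) = -(1/2) * t := by
    rw [ht, dot_symm H hH]
  rw [hgoal]
  have hratio : (d : ℝ) * ((d - 1 : ℕ) : ℝ) / 2 / ((d - 1 : ℕ) : ℝ) * s = (d : ℝ) / 2 * s := by
    rcases Nat.eq_or_lt_of_le hd with h1 | h1
    · have : d = 1 := h1.symm
      subst this
      have : s = 0 := by
        rw [hs, hA]
        have : (Finset.univ : Finset (Fin 1)).erase j = ∅ := by
          apply Finset.eq_empty_of_forall_notMem
          intro x hx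
          simp only [Finset.mem_erase, Finset.mem_univ, and_true] at hx
          exact hx (Subsingleton.elim x j)
        rw [this, Finset.sum_empty]
      rw [this]; ring
    · have hD : ((d - 1 : ℕ) : ℝ) ≠ 0 := by
        have : 0 < d - 1 := by omega
        positivity
      rw [div_div, mul_comm (2:ℝ), ← div_div, mul_div_assoc, div_self hD]
      ring
  have hdne : (d : ℝ) ≠ 0 := by positivity
  calc (1 / (d : ℝ)) * ((d : ℝ) * c + (d : ℝ) * ((d - 1 : ℕ) : ℝ) / 2 / ((d - 1 : ℕ) : ℝ) * s)
      = (1 / (d : ℝ)) * ((d : ℝ) * c + (d : ℝ) / 2 * s) := by rw [hratio]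
    _ = c + s / 2 := by field_simp
    _ = -(1/2) * t := by rw [hc, hst]; ring
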